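/- Let S = (0,∞)^n be the open positive orthant in R^n with its Hilbert–Finsler norm. For every x = (x₁,…,x_n) ∈ S, the Lebesgue volume of the tangent unit ball T_xB(1) = {v : F_S(x,v) < 1} satisfies (4^n/n!) Π_{i=1}^n xᵢ ≤ Leb(T_xB(1)) ≤ 4^n Π_{i=1}^n xᵢ. -/

import Mathlib

open scoped ENNReal
open MeasureTheory

noncomputable section

/-- Exit time of the open convex set `A` from `p` in direction `v`:
`sup {t > 0 : p + t • v ∈ A}` in `ℝ≥0∞` (so it is `∞` when the ray stays in `A`). -/
def exitTime {V : Type*} [AddCommGroup V] [Module ℝ V] (A : Set V) (p v : V) : ℝ≥0∞ :=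
  ⨆ t ∈ {t : ℝ | 0 < t ∧ p + t • v ∈ A}, ENNReal.ofReal t

/-- The Hilbert–Finsler norm `F_A(p,v) = (1/2)(1/t⁺ + 1/t⁻)`, with `1/∞ = 0`. -/
def finsler {V : Type*} [AddCommGroup V] [Module ℝ V] (A : Set V) (p v : V) : ℝ :=
  ((exitTime A p v)⁻¹ + (exitTime A p (-v))⁻¹).toReal / 2

/-- `A` contains no affine line (properness). -/
def LineFree {V : Type*} [AddCommGroup V] [Module ℝ V] (A : Set V) : Prop :=
  ¬ ∃ p v : V, v ≠ 0 ∧ ∀ t : ℝ, p + t • v ∈ A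

open Classical in
/-- The Hilbert distance of `A`, written via the exit times `t⁺ = exitTime A p (q-p)`,
`t⁻ = exitTime A p (p-q)`: the cross-ratio of `(a,p,q,b)` equals
`(t⁺/(t⁺-1)) · ((t⁻+1)/t⁻)`, factors involving a boundary point at infinity being `1`. -/
def hilbertDist {V : Type*} [AddCommGroup V] [Module ℝ V] (A : Set V) (p q : V) : ℝ :=
  if p = q then 0 else
    (1 / 2) * Real.log
      ((if exitTime A p (q - p) = ∞ then 1 else
          (exitTime A p (q - p)).toReal / ((exitTime A p (q - p)).toReal - 1)) *
       (if exitTime A p (p - q) = ∞ then 1 else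
          ((exitTime A p (p - q)).toReal + 1) / (exitTime A p (p - q)).toReal))

/-- Open ball of the Hilbert distance. -/
def hilbertBall {V : Type*} [AddCommGroup V] [Module ℝ V] (A : Set V) (p : V) (R : ℝ) :
    Set V :=
  {q ∈ A | hilbertDist A p q < R}

/-- The open positive orthant `(0,∞)ⁿ`. -/
def orthant (n : ℕ) : Set (EuclideanSpace ℝ (Fin n)) :=
  {x | ∀ i, 0 < x i}

section OrthantAux

variable {n : ℕ}


lemma le_exitTime {V : Type*} [AddCommGroup V] [Module ℝ V] {A : Set V} {p v : V} {c : ℝ}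
    (hc : 0 < c) (h : p + c • v ∈ A) : ENNReal.ofReal c ≤ exitTime A p v :=
  le_iSup₂ (f := fun t (_ : t ∈ {t : ℝ | 0 < t ∧ p + t • v ∈ A}) => ENNReal.ofReal t) c ⟨hc, h⟩

lemma exitTime_le {V : Type*} [AddCommGroup V] [Module ℝ V] {A : Set V} {p v : V} {b : ℝ}
    (h : ∀ t : ℝ, 0 < t → p + t • v ∈ A → t ≤ b) : exitTime A p v ≤ ENNReal.ofReal b :=
  iSup₂_le fun t ht => ENNReal.ofReal_le_ofReal (h t ht.1 ht.2)

lemma mem_orthant_add_smul {x v : EuclideanSpace ℝ (Fin n)} {c : ℝ}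
    (h : ∀ i, c * (-(v i)) < x i) : x + c • v ∈ orthant n := by
  intro i
  have := h i
  simp only [PiLp.add_apply, PiLp.smul_apply, smul_eq_mul]
  linarith

lemma inv_exitTime_le {x : EuclideanSpace ℝ (Fin n)} (hx : x ∈ orthant n)
    (v : EuclideanSpace ℝ (Fin n)) {ε : ℝ} (hε : 0 < ε) :
    (exitTime (orthant n) x v)⁻¹ ≤ ENNReal.ofReal (∑ i, max (-(v i)) 0 / x i + ε) := by
  set s : ℝ := ∑ i, max (-(v i)) 0 / x i with hs
  have hs0 : 0 ≤ s := Finset.sum_nonneg fun i _ => div_nonneg (le_max_right _ _) (hx i).le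
  have hc : 0 < s + ε := by linarith
  have hmem : x + (s + ε)⁻¹ • v ∈ orthant n := by
    apply mem_orthant_add_smul
    intro i
    have h1 : max (-(v i)) 0 / x i ≤ s :=
      Finset.single_le_sum (f := fun j => max (-(v j)) 0 / x j)
        (fun j _ => div_nonneg (le_max_right _ _) (hx j).le) (Finset.mem_univ i)
    have hxi := hx i
    have h2 : -(v i) ≤ s * x i := le_trans (le_max_left _ _) ((div_le_iff₀ hxi).mp h1)
    have h3 : (s + ε)⁻¹ * s < 1 := by
      rw [inv_mul_lt_iff₀ hc, mul_one]; linarith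
    calc (s + ε)⁻¹ * (-(v i)) ≤ (s + ε)⁻¹ * (s * x i) :=
          mul_le_mul_of_nonneg_left h2 (inv_nonneg.mpr hc.le)
      _ = (s + ε)⁻¹ * s * x i := by ring
      _ < 1 * x i := mul_lt_mul_of_pos_right h3 hxi
      _ = x i := one_mul _
  have h4 : ENNReal.ofReal ((s + ε)⁻¹) ≤ exitTime (orthant n) x v :=
    le_exitTime (inv_pos.mpr hc) hmem
  calc (exitTime (orthant n) x v)⁻¹ ≤ (ENNReal.ofReal ((s + ε)⁻¹))⁻¹ :=
        ENNReal.inv_le_inv.mpr h4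
    _ = ENNReal.ofReal (s + ε) := by
        rw [ENNReal.ofReal_inv_of_pos hc, inv_inv]

lemma inv_exitTime_ne_top {x : EuclideanSpace ℝ (Fin n)} (hx : x ∈ orthant n)
    (v : EuclideanSpace ℝ (Fin n)) : (exitTime (orthant n) x v)⁻¹ ≠ ⊤ :=
  ne_top_of_le_ne_top ENNReal.ofReal_ne_top (inv_exitTime_le hx v one_pos)

lemma ofReal_le_inv_exitTime {x : EuclideanSpace ℝ (Fin n)} (hx : x ∈ orthant n)
    {v : EuclideanSpace ℝ (Fin n)} {i : Fin n} (hvi : v i < 0) :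
    ENNReal.ofReal (-(v i) / x i) ≤ (exitTime (orthant n) x v)⁻¹ := by
  have hvi' : 0 < -(v i) := by linarith
  have hpos : 0 < x i / (-(v i)) := div_pos (hx i) hvi'
  have h1 : exitTime (orthant n) x v ≤ ENNReal.ofReal (x i / (-(v i))) := by
    apply exitTime_le
    intro t ht hmem
    have h2 : 0 < x i + t * v i := by
      have := hmem i
      simpa only [PiLp.add_apply, PiLp.smul_apply, smul_eq_mul] using this
    rw [le_div_iff₀ hvi']
    nlinarith
  calc ENNReal.ofReal (-(v i) / x i) = (ENNReal.ofReal (x i / (-(v i))))⁻¹ := by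
        rw [← ENNReal.ofReal_inv_of_pos hpos, inv_div]
    _ ≤ (exitTime (orthant n) x v)⁻¹ := ENNReal.inv_le_inv.mpr h1

lemma finsler_lt_one {x : EuclideanSpace ℝ (Fin n)} (hx : x ∈ orthant n)
    {v : EuclideanSpace ℝ (Fin n)} (hv : ∑ i, |v i| / (2 * x i) < 1) :
    finsler (orthant n) x v < 1 := by
  set S : ℝ := ∑ i, |v i| / x i with hS
  have hS2 : S = 2 * ∑ i, |v i| / (2 * x i) := by
    rw [Finset.mul_sum]
    refine Finset.sum_congr rfl fun i _ => ?_
    rw [← mul_div_assoc, mul_div_mul_left _ _ (two_ne_zero)]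
  have hSlt : S < 2 := by rw [hS2]; linarith
  set sm : ℝ := ∑ i, max (-(v i)) 0 / x i with hsm
  set sp : ℝ := ∑ i, max (v i) 0 / x i with hsp
  have hsum : sp + sm = S := by
    rw [hsp, hsm, hS, ← Finset.sum_add_distrib]
    refine Finset.sum_congr rfl fun i _ => ?_
    rw [← add_div, max_zero_add_max_neg_zero_eq_abs_self]
  set ε : ℝ := (2 - S) / 4 with hε
  have hε0 : 0 < ε := by rw [hε]; linarith
  have ha : (exitTime (orthant n) x v)⁻¹ ≤ ENNReal.ofReal (sm + ε) :=
    inv_exitTime_le hx v hε0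
  have hb : (exitTime (orthant n) x (-v))⁻¹ ≤ ENNReal.ofReal (sp + ε) := by
    have := inv_exitTime_le hx (-v) hε0
    simpa only [PiLp.neg_apply, neg_neg] using this
  have hsm0 : 0 ≤ sm := Finset.sum_nonneg fun i _ => div_nonneg (le_max_right _ _) (hx i).le
  have hsp0 : 0 ≤ sp := Finset.sum_nonneg fun i _ => div_nonneg (le_max_right _ _) (hx i).le
  have hadd : (exitTime (orthant n) x v)⁻¹ + (exitTime (orthant n) x (-v))⁻¹ ≤
      ENNReal.ofReal ((sm + ε) + (sp + ε)) := by
    rw [ENNReal.ofReal_add (by linarith) (by linarith)]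
    exact add_le_add ha hb
  have htr : ((exitTime (orthant n) x v)⁻¹ + (exitTime (orthant n) x (-v))⁻¹).toReal ≤
      (sm + ε) + (sp + ε) := by
    have := ENNReal.toReal_mono ENNReal.ofReal_ne_top hadd
    rwa [ENNReal.toReal_ofReal (by linarith)] at this
  rw [finsler, div_lt_one (by norm_num : (0:ℝ) < 2)]
  calc ((exitTime (orthant n) x v)⁻¹ + (exitTime (orthant n) x (-v))⁻¹).toReal
      ≤ (sm + ε) + (sp + ε) := htr
    _ = S + 2 * ε := by linarith
    _ < 2 := by rw [hε]; linarith

lemma abs_lt_of_finsler_lt_one {x : EuclideanSpace ℝ (Fin n)} (hx : x ∈ orthant n)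
    {v : EuclideanSpace ℝ (Fin n)} (hf : finsler (orthant n) x v < 1) (i : Fin n) :
    |v i| < 2 * x i := by
  by_contra hcon
  push_neg at hcon
  have hxi := hx i
  have hne : v i ≠ 0 := by
    intro h0
    rw [h0, abs_zero] at hcon
    linarith
  have ha := inv_exitTime_ne_top hx v
  have hb := inv_exitTime_ne_top hx (-v)
  have hkey : (1:ℝ) ≤ finsler (orthant n) x v := by
    rw [finsler, le_div_iff₀ (by norm_num : (0:ℝ) < 2),
      ENNReal.toReal_add ha hb]
    have hA : (0:ℝ) ≤ ((exitTime (orthant n) x v)⁻¹).toReal := ENNReal.toReal_nonneg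
    have hB : (0:ℝ) ≤ ((exitTime (orthant n) x (-v))⁻¹).toReal := ENNReal.toReal_nonneg
    rcases lt_or_gt_of_ne hne with hneg | hpos
    · have hE := ofReal_le_inv_exitTime hx hneg
      have h2 : 2 ≤ -(v i) / x i := by
        rw [le_div_iff₀ hxi]
        have : |v i| = -(v i) := abs_of_neg hneg
        linarith
      have h3 : -(v i) / x i ≤ ((exitTime (orthant n) x v)⁻¹).toReal := by
        have := ENNReal.toReal_mono ha hE
        rwa [ENNReal.toReal_ofReal (div_nonneg (by linarith) hxi.le)] at this
      linarith
    · have hneg' : (-v) i < 0 := by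
        simp only [PiLp.neg_apply]; linarith
      have hE := ofReal_le_inv_exitTime hx hneg'
      simp only [PiLp.neg_apply, neg_neg] at hE
      have h2 : 2 ≤ v i / x i := by
        rw [le_div_iff₀ hxi]
        have : |v i| = v i := abs_of_pos hpos
        linarith
      have h3 : v i / x i ≤ ((exitTime (orthant n) x (-v))⁻¹).toReal := by
        have := ENNReal.toReal_mono hb hE
        rwa [ENNReal.toReal_ofReal (div_nonneg hpos.le hxi.le)] at this
      linarith
  linarith



lemma volume_box {x : EuclideanSpace ℝ (Fin n)} (hx : x ∈ orthant n) :
    volume {v : EuclideanSpace ℝ (Fin n) | ∀ i, |v i| < 2 * x i} =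
      ENNReal.ofReal (4 ^ n * ∏ i, x i) := by
  have hpre : {v : EuclideanSpace ℝ (Fin n) | ∀ i, |v i| < 2 * x i} =
      (MeasurableEquiv.toLp 2 (Fin n → ℝ)).symm ⁻¹'
        (Set.univ.pi fun i => Set.Ioo (-(2 * x i)) (2 * x i)) := by
    ext v
    simp only [Set.mem_setOf_eq, Set.mem_preimage, Set.mem_univ_pi, Set.mem_Ioo,
      MeasurableEquiv.coe_toLp_symm, abs_lt]
  rw [hpre, (EuclideanSpace.volume_preserving_symm_measurableEquiv_toLp (Fin n)).measure_preimage
    ((MeasurableSet.univ_pi fun i => measurableSet_Ioo).nullMeasurableSet),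
    volume_pi_pi]
  have : ∀ i : Fin n, volume (Set.Ioo (-(2 * x i)) (2 * x i)) = ENNReal.ofReal (4 * x i) := by
    intro i
    rw [Real.volume_Ioo]
    congr 1
    ring
  simp_rw [this]
  rw [← ENNReal.ofReal_prod_of_nonneg (fun i _ => mul_nonneg (by norm_num) (hx i).le)]
  congr 1
  rw [Finset.prod_mul_distrib, Finset.prod_const, Finset.card_univ, Fintype.card_fin]

lemma volume_l1_unit :
    volume {u : Fin n → ℝ | ∑ i, |u i| < 1} =
      ENNReal.ofReal ((2:ℝ) ^ n / (Nat.factorial n : ℝ)) := by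
  have h := MeasureTheory.volume_sum_rpow_lt_one (Fin n) (le_refl (1:ℝ))
  simp only [Real.rpow_one, Fintype.card_fin, div_one] at h
  rw [h]
  congr 1
  rw [show (1:ℝ) + 1 = 2 by norm_num, Real.Gamma_two, mul_one,
    Real.Gamma_nat_eq_factorial]

lemma volume_cross {x : EuclideanSpace ℝ (Fin n)} (hx : x ∈ orthant n) :
    volume {v : EuclideanSpace ℝ (Fin n) | ∑ i, |v i| / (2 * x i) < 1} =
      ENNReal.ofReal (4 ^ n / (Nat.factorial n : ℝ) * ∏ i, x i) := by
  have hx2 : ∀ i, (0:ℝ) < 2 * x i := fun i => by have := hx i; linarith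
  set P : Set (Fin n → ℝ) := {w | ∑ i, |w i| / (2 * x i) < 1} with hP
  have hPmeas : MeasurableSet P := by
    apply measurableSet_lt _ measurable_const
    exact Finset.measurable_sum _ fun i _ => ((measurable_pi_apply i).abs).div_const _
  have hpre : {v : EuclideanSpace ℝ (Fin n) | ∑ i, |v i| / (2 * x i) < 1} =
      (MeasurableEquiv.toLp 2 (Fin n → ℝ)).symm ⁻¹' P := rfl
  rw [hpre, (EuclideanSpace.volume_preserving_symm_measurableEquiv_toLp (Fin n)).measure_preimage
    hPmeas.nullMeasurableSet]
  set g : (Fin n → ℝ) →ₗ[ℝ] (Fin n → ℝ) :=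
    Matrix.toLin' (Matrix.diagonal fun i => (2 * x i)⁻¹) with hg
  have hdet : LinearMap.det g = ∏ i, (2 * x i)⁻¹ := by
    rw [hg, LinearMap.det_toLin', Matrix.det_diagonal]
  have hdet0 : LinearMap.det g ≠ 0 := by
    rw [hdet]
    exact Finset.prod_ne_zero_iff.mpr fun i _ => inv_ne_zero (hx2 i).ne'
  have hPg : P = g ⁻¹' {u : Fin n → ℝ | ∑ i, |u i| < 1} := by
    ext w
    simp only [hP, Set.mem_setOf_eq, Set.mem_preimage, hg, Matrix.toLin'_apply,
      Matrix.mulVec_diagonal]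
    have : ∀ i : Fin n, |(2 * x i)⁻¹ * w i| = |w i| / (2 * x i) := by
      intro i
      rw [abs_mul, abs_of_pos (inv_pos.mpr (hx2 i)), ← div_eq_inv_mul]
    rw [Finset.sum_congr rfl fun i _ => this i]
  rw [hPg, Measure.addHaar_preimage_linearMap volume hdet0, volume_l1_unit, hdet,
    Finset.prod_inv_distrib, inv_inv,
    abs_of_pos (Finset.prod_pos fun i _ => hx2 i),
    ← ENNReal.ofReal_mul (Finset.prod_nonneg fun i _ => (hx2 i).le)]
  congr 1
  have h1 : (∏ i, 2 * x i) = 2 ^ n * ∏ i, x i := by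
    rw [Finset.prod_mul_distrib, Finset.prod_const, Finset.card_univ, Fintype.card_fin]
  rw [h1, show (4:ℝ) ^ n = 2 ^ n * 2 ^ n by rw [← mul_pow]; norm_num]
  ring


end OrthantAux

/-- `(4ⁿ/n!) Π xᵢ ≤ Leb(T_xB(1)) ≤ 4ⁿ Π xᵢ` for the positive orthant. -/
theorem orthant_unit_ball_volume {n : ℕ} (x : EuclideanSpace ℝ (Fin n))
    (hx : x ∈ orthant n) :
    4 ^ n / (Nat.factorial n : ℝ) * ∏ i, x i ≤
        (volume {v : EuclideanSpace ℝ (Fin n) | finsler (orthant n) x v < 1}).toReal ∧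
      (volume {v : EuclideanSpace ℝ (Fin n) | finsler (orthant n) x v < 1}).toReal ≤
        4 ^ n * ∏ i, x i := by
  classical
  set B := {v : EuclideanSpace ℝ (Fin n) | finsler (orthant n) x v < 1} with hB
  set L := {v : EuclideanSpace ℝ (Fin n) | ∑ i, |v i| / (2 * x i) < 1} with hL
  set U := {v : EuclideanSpace ℝ (Fin n) | ∀ i, |v i| < 2 * x i} with hU
  have hLB : L ⊆ B := fun v hv => finsler_lt_one hx hv
  have hBU : B ⊆ U := fun v hv i => abs_lt_of_finsler_lt_one hx hv i
  have hvolU : volume U = ENNReal.ofReal (4 ^ n * ∏ i, x i) := volume_box hx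
  have hvolL : volume L = ENNReal.ofReal (4 ^ n / (Nat.factorial n : ℝ) * ∏ i, x i) :=
    volume_cross hx
  have hUtop : volume U ≠ ⊤ := by rw [hvolU]; exact ENNReal.ofReal_ne_top
  have hBtop : volume B ≠ ⊤ := ne_top_of_le_ne_top hUtop (measure_mono hBU)
  have hprod : (0:ℝ) ≤ ∏ i, x i := Finset.prod_nonneg fun i _ => (hx i).le
  constructor
  · have h1 := ENNReal.toReal_mono hBtop (measure_mono hLB)
    rwa [hvolL, ENNReal.toReal_ofReal
      (mul_nonneg (by positivity) hprod)] at h1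
  · have h1 := ENNReal.toReal_mono hUtop (measure_mono hBU)
    rwa [hvolU, ENNReal.toReal_ofReal (mul_nonneg (by positivity) hprod)] at h1
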